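/- In any M-algebra (X, M), suppose α, β ∈ M commute, ν_α ∈ M is a negation of α, ν_β ∈ M is a negation of β, and μ ∈ M is a negation of the composite map x ↦ ν_β(ν_α(x)) (which belongs to M). Then Z(μ) = Z(α) ∩ Z(β), and μ is the unique element of M whose zero set equals Z(α) ∩ Z(β). (μ is the disjunction α ∨ β.) -/

import Mathlib

/-- `α` preserves `β`: `α` maps the fixpoints of `β` into the fixpoints of `β`. -/
def Preserves {X : Type*} (α β : X → X) : Prop :=
  ∀ x, β x = x → β (α x) = α x

/-- `ν` is a negation of `α`: `FP ν = Z α` and `Z ν = FP α`. -/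
def IsNegation {X : Type*} [Zero X] (ν α : X → X) : Prop :=
  (∀ x, ν x = x ↔ α x = 0) ∧ (∀ x, ν x = 0 ↔ α x = x)

/-- Two maps commute. -/
def Commutes {X : Type*} (α β : X → X) : Prop :=
  ∀ x, α (β x) = β (α x)

/-- An M-algebra on a type `X` with a distinguished illegitimate state `0`. -/
structure MAlgebra (X : Type*) [Zero X] where
  M : Set (X → X)
  illegitimate : ∀ α ∈ M, α 0 = 0
  idempotence : ∀ α ∈ M, ∀ x : X, α (α x) = α x
  composition : ∀ α ∈ M, ∀ β ∈ M, Preserves α β → (fun x => α (β x)) ∈ M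
  interference : ∀ α ∈ M, ∀ β ∈ M, ∀ x : X,
    α x = x → β (α (β x)) = α (β x) → α (β x) = β x
  cumulativity : ∀ α ∈ M, ∀ β ∈ M, ∀ x : X,
    β (α x) = α x → α (β x) = β x → α x = β x
  negation : ∀ α ∈ M, ∃ ν ∈ M, IsNegation ν α

/-- Key lemma: if `α` and `β` commute, then the zero set of `α` is closed under `νβ`. -/
lemma malgebra_zero_closed {X : Type*} [Zero X] (A : MAlgebra X)
    {α β να νβ : X → X} (hα : α ∈ A.M) (hνα : να ∈ A.M) (hνβ : νβ ∈ A.M)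
    (hcomm : Commutes α β)
    (hnegα : IsNegation να α) (hnegβ : IsNegation νβ β) :
    ∀ t, α t = 0 → α (νβ t) = 0 := by
  -- α preserves νβ, so the composite h = α ∘ νβ is a measurement
  have hpres : Preserves α νβ := by
    intro x hx
    have hβx : β x = 0 := (hnegβ.1 x).mp hx
    have : β (α x) = 0 := by rw [← hcomm, hβx, A.illegitimate α hα]
    exact (hnegβ.1 (α x)).mpr this
  have hmem : (fun x => α (νβ x)) ∈ A.M := A.composition α hα νβ hνβ hpres
  intro t ht
  have hναt : να t = t := (hnegα.1 t).mpr ht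
  have hαq : α (α (νβ t)) = α (νβ t) := A.idempotence α hα (νβ t)
  have hναq : να (α (νβ t)) = 0 := (hnegα.2 (α (νβ t))).mpr hαq
  -- apply interference to να and h at t
  have hint := A.interference να hνα (fun x => α (νβ x)) hmem t hναt
  have h2 : α (νβ (να (α (νβ t)))) = να (α (νβ t)) := by
    rw [hναq, A.illegitimate νβ hνβ, A.illegitimate α hα]
  have := hint h2
  rw [hναq] at this
  exact this.symm

/-- Two measurements with the same fixpoint sets are equal. -/
lemma malgebra_fp_eq {X : Type*} [Zero X] (A : MAlgebra X)
    {γ δ : X → X} (hγ : γ ∈ A.M) (hδ : δ ∈ A.M)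
    (h : ∀ x, γ x = x ↔ δ x = x) : γ = δ := by
  funext x
  exact A.cumulativity γ hγ δ hδ x
    ((h (γ x)).mp (A.idempotence γ hγ x))
    ((h (δ x)).mpr (A.idempotence δ hδ x))

theorem malgebra_disjunction {X : Type*} [Zero X] (A : MAlgebra X)
    {α β να νβ μ : X → X} (hα : α ∈ A.M) (hβ : β ∈ A.M)
    (hνα : να ∈ A.M) (hνβ : νβ ∈ A.M) (hμ : μ ∈ A.M)
    (hcomm : Commutes α β)
    (hnegα : IsNegation να α) (hnegβ : IsNegation νβ β)
    (hnegμ : IsNegation μ (fun x => νβ (να x))) :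
    (fun x => νβ (να x)) ∈ A.M ∧
    {x : X | μ x = 0} = {x : X | α x = 0} ∩ {x : X | β x = 0} ∧
    ∀ γ ∈ A.M, {x : X | γ x = 0} = {x : X | α x = 0} ∩ {x : X | β x = 0} → γ = μ := by
  have hcomm' : Commutes β α := fun x => (hcomm x).symm
  have hzα : ∀ t, α t = 0 → α (νβ t) = 0 :=
    malgebra_zero_closed A hα hνα hνβ hcomm hnegα hnegβ
  -- νβ preserves να, hence the composite is a measurement
  have hpres : Preserves νβ να := by
    intro x hx
    exact (hnegα.1 _).mpr (hzα x ((hnegα.1 x).mp hx))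
  have hgmem : (fun x => νβ (να x)) ∈ A.M := A.composition νβ hνβ να hνα hpres
  -- the zero set of μ
  have hZ : ∀ x : X, μ x = 0 ↔ (α x = 0 ∧ β x = 0) := by
    intro x
    rw [hnegμ.2 x]
    constructor
    · intro h
      simp only at h
      have h1 : α (να x) = 0 := (hnegα.1 (να x)).mp (A.idempotence να hνα x)
      have h2 : α (νβ (να x)) = 0 := hzα (να x) h1
      rw [h] at h2
      have hναx : να x = x := (hnegα.1 x).mpr h2
      rw [hναx] at h
      exact ⟨h2, (hnegβ.1 x).mp h⟩
    · rintro ⟨h1, h2⟩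
      show νβ (να x) = x
      rw [(hnegα.1 x).mpr h1, (hnegβ.1 x).mpr h2]
  have hZset : {x : X | μ x = 0} = {x : X | α x = 0} ∩ {x : X | β x = 0} := by
    ext x; exact (hZ x).trans Iff.rfl
  refine ⟨hgmem, hZset, ?_⟩
  intro γ hγ hγZ
  -- γ and μ have the same zero sets
  have hsame : ∀ x, γ x = 0 ↔ μ x = 0 := by
    intro x
    have := Set.ext_iff.mp (hγZ.trans hZset.symm) x
    exact this
  obtain ⟨νγ, hνγ, hnγ⟩ := A.negation γ hγ
  obtain ⟨νμ, hνμ, hnμ⟩ := A.negation μ hμ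
  have hνeq : νγ = νμ := by
    apply malgebra_fp_eq A hνγ hνμ
    intro x
    rw [hnγ.1 x, hnμ.1 x, hsame x]
  have hfp : ∀ x, γ x = x ↔ μ x = x := by
    intro x
    rw [← hnγ.2 x, ← hnμ.2 x, hνeq]
  exact malgebra_fp_eq A hγ hμ hfp
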